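/- Under the same setup (ℓᵢ differentiable and L-smooth, GᵀGα = 1/α with α > 0, Δθ = Gα, μ = minⱼ 1/(L·K·αⱼ)), the average loss ℒ(θ) = (1/K)∑ᵢ ℓᵢ(θ) satisfies ℒ(θ - μΔθ) ≤ ℒ(θ) - (L·K·μ²)/2. -/

import Mathlib

open RealInnerProductSpace intervalIntegral

lemma descent_lemma {E : Type*} [NormedAddCommGroup E] [InnerProductSpace ℝ E] [CompleteSpace E]
    (L : ℝ) (hL : 0 ≤ L) (f : E → ℝ) (f' : E → E)
    (hdiff : ∀ x, HasGradientAt f (f' x) x)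
    (hsmooth : ∀ x y, ‖f' x - f' y‖ ≤ L * ‖x - y‖) (x v : E) :
    f (x + v) ≤ f x + ⟪f' x, v⟫ + L / 2 * ‖v‖ ^ 2 := by
  set φ' : ℝ → ℝ := fun t => ⟪f' (x + t • v), v⟫ with hφ'
  have hφ : ∀ t : ℝ, HasDerivAt (fun t : ℝ => f (x + t • v)) (φ' t) t := by
    intro t
    have hc : HasDerivAt (fun t : ℝ => x + t • v) v t := by
      simpa using ((hasDerivAt_id t).smul_const v).const_add x
    have h2 := ((hdiff (x + t • v)).hasFDerivAt).comp_hasDerivAt t hc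
    exact h2
  have hf'cont : Continuous f' := by
    refine (LipschitzWith.of_dist_le_mul (K := L.toNNReal) ?_).continuous
    intro a b
    rw [dist_eq_norm, dist_eq_norm, Real.coe_toNNReal L hL]
    exact hsmooth a b
  have hcont : Continuous φ' :=
    ((hf'cont.comp (continuous_const.add (continuous_id.smul continuous_const)))).inner
      continuous_const
  have hFTC : (∫ t in (0:ℝ)..1, φ' t) = f (x + v) - f x := by
    have := intervalIntegral.integral_eq_sub_of_hasDerivAt
      (f := fun t : ℝ => f (x + t • v)) (f' := φ')
      (fun t _ => hφ t) (hcont.intervalIntegrable 0 1)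
    simpa using this
  have hbound : ∀ t ∈ Set.Icc (0:ℝ) 1, φ' t ≤ ⟪f' x, v⟫ + L * ‖v‖ ^ 2 * t := by
    intro t ht
    have h1 : φ' t - ⟪f' x, v⟫ = ⟪f' (x + t • v) - f' x, v⟫ := by
      rw [inner_sub_left]
    have h2 : ⟪f' (x + t • v) - f' x, v⟫ ≤ ‖f' (x + t • v) - f' x‖ * ‖v‖ :=
      real_inner_le_norm _ _
    have h3 : ‖f' (x + t • v) - f' x‖ ≤ L * (t * ‖v‖) := by
      have := hsmooth (x + t • v) x
      simpa [norm_smul, abs_of_nonneg ht.1] using this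
    nlinarith [norm_nonneg v, mul_le_mul_of_nonneg_right h3 (norm_nonneg v)]
  have hint : (∫ t in (0:ℝ)..1, φ' t) ≤ ∫ t in (0:ℝ)..1, (⟪f' x, v⟫ + L * ‖v‖ ^ 2 * t) := by
    apply intervalIntegral.integral_mono_on (by norm_num)
      (hcont.intervalIntegrable 0 1)
      ((continuous_const.add (continuous_const.mul continuous_id)).intervalIntegrable 0 1)
    exact hbound
  have hval : (∫ t in (0:ℝ)..1, (⟪f' x, v⟫ + L * ‖v‖ ^ 2 * t)) = ⟪f' x, v⟫ + L / 2 * ‖v‖ ^ 2 := by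
    have i2 : IntervalIntegrable (fun t : ℝ => L * ‖v‖ ^ 2 * t) MeasureTheory.volume 0 1 :=
      (continuous_const.mul continuous_id).intervalIntegrable 0 1
    rw [intervalIntegral.integral_add (intervalIntegrable_const) i2]
    rw [intervalIntegral.integral_const_mul, integral_id, intervalIntegral.integral_const]
    norm_num
    ring
  rw [hFTC, hval] at hint
  linarith

/-- Descent of the average loss for the Nash-MTL update: with `L`-smooth losses, gradients
`g i` at `θ`, `α > 0` solving `GᵀGα = 1/α`, `Δθ = ∑ αᵢgᵢ` and `μ = minⱼ 1/(LKαⱼ)`,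
the average loss `ℒ(θ) = (1/K)∑ᵢ ℓᵢ(θ)` satisfies `ℒ(θ - μΔθ) ≤ ℒ(θ) - LKμ²/2`. -/
theorem stmt_7 {d K : ℕ} (hK : 0 < K) (L : ℝ) (hL : 0 < L)
    (ℓ : Fin K → EuclideanSpace ℝ (Fin d) → ℝ)
    (ℓ' : Fin K → EuclideanSpace ℝ (Fin d) → EuclideanSpace ℝ (Fin d))
    (hdiff : ∀ i x, HasGradientAt (ℓ i) (ℓ' i x) x)
    (hsmooth : ∀ i x y, ‖ℓ' i x - ℓ' i y‖ ≤ L * ‖x - y‖)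
    (θ : EuclideanSpace ℝ (Fin d))
    (g : Fin K → EuclideanSpace ℝ (Fin d)) (hg : ∀ i, g i = ℓ' i θ)
    (α : Fin K → ℝ) (hα : ∀ i, 0 < α i)
    (heq : ∀ i, ⟪g i, ∑ j, α j • g j⟫ = 1 / α i)
    (Δθ : EuclideanSpace ℝ (Fin d)) (hΔθ : Δθ = ∑ j, α j • g j)
    (μ : ℝ) (hμ : μ = ⨅ j, 1 / (L * K * α j))
    (ℒ : EuclideanSpace ℝ (Fin d) → ℝ) (hℒ : ∀ x, ℒ x = (1 / K : ℝ) * ∑ i, ℓ i x) :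
    ℒ (θ - μ • Δθ) ≤ ℒ θ - L * K * μ ^ 2 / 2 := by
  haveI : Nonempty (Fin K) := ⟨⟨0, hK⟩⟩
  have hKR : (0:ℝ) < K := by exact_mod_cast hK
  have hμpos : 0 < μ := by
    obtain ⟨j, hj⟩ := exists_eq_ciInf_of_finite (f := fun j : Fin K => 1 / (L * K * α j))
    rw [hμ, ← hj]
    have := hα j
    positivity
  have hμle : ∀ i, μ ≤ 1 / (L * K * α i) := by
    intro i
    rw [hμ]
    exact ciInf_le (Set.Finite.bddBelow (Set.finite_range _)) i
  have hkey : ∀ i, L * K * μ ≤ 1 / α i := by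
    intro i
    have h := mul_le_mul_of_nonneg_left (hμle i) (le_of_lt (by positivity : (0:ℝ) < L * K))
    have he : L * K * (1 / (L * K * α i)) = 1 / α i := by
      have h2 : α i ≠ 0 := (hα i).ne'
      have h3 : L * (K:ℝ) ≠ 0 := by positivity
      field_simp
    linarith [he ▸ h]
  have hinner : ∀ i, ⟪g i, Δθ⟫ = 1 / α i := fun i => hΔθ ▸ heq i
  have hnorm : ‖Δθ‖ ^ 2 = (K : ℝ) := by
    rw [← real_inner_self_eq_norm_sq]
    nth_rewrite 1 [hΔθ]
    rw [sum_inner]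
    have : ∀ j, ⟪α j • g j, Δθ⟫ = (1:ℝ) := by
      intro j
      rw [real_inner_smul_left, hinner j]
      rw [mul_one_div, div_self (hα j).ne']
    simp [this]
  have hstep : ∀ i, ℓ i (θ - μ • Δθ) ≤ ℓ i θ - L * K * μ ^ 2 / 2 := by
    intro i
    have hd := descent_lemma L hL.le (ℓ i) (ℓ' i) (hdiff i) (hsmooth i) θ (-(μ • Δθ))
    have he1 : θ + -(μ • Δθ) = θ - μ • Δθ := by abel
    have he2 : ⟪ℓ' i θ, -(μ • Δθ)⟫ = -(μ * (1 / α i)) := by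
      rw [inner_neg_right, real_inner_smul_right, ← hg, hinner i]
    have he3 : ‖-(μ • Δθ)‖ ^ 2 = μ ^ 2 * K := by
      rw [norm_neg, norm_smul, mul_pow, hnorm]
      simp [sq_abs]
    rw [he1, he2, he3] at hd
    have hge : L * K * μ ^ 2 ≤ μ * (1 / α i) := by
      have := mul_le_mul_of_nonneg_left (hkey i) hμpos.le
      nlinarith
    nlinarith
  have hsum : ∑ i, ℓ i (θ - μ • Δθ) ≤ ∑ i, (ℓ i θ - L * K * μ ^ 2 / 2) :=
    Finset.sum_le_sum fun i _ => hstep i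
  rw [hℒ, hℒ]
  have : ∑ i, (ℓ i θ - L * K * μ ^ 2 / 2) = (∑ i, ℓ i θ) - K * (L * K * μ ^ 2 / 2) := by
    rw [Finset.sum_sub_distrib]
    simp [Finset.card_fin]
  rw [this] at hsum
  have h2 := mul_le_mul_of_nonneg_left hsum (by positivity : (0:ℝ) ≤ 1 / K)
  calc (1 / K : ℝ) * ∑ i, ℓ i (θ - μ • Δθ)
      ≤ (1 / K : ℝ) * ((∑ i, ℓ i θ) - K * (L * K * μ ^ 2 / 2)) := h2
    _ = (1 / K : ℝ) * ∑ i, ℓ i θ - L * K * μ ^ 2 / 2 := by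
        field_simp
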